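/- Along solutions of the Bianchi VI_0 Wainwright–Hsu system with Ω > 0 and N_-^2 > N_+^2, the function Z_4 := (N_-^2 - N_+^2)^m Ω^{1-m} / (2 + q*Σ_+)^2 with m = q*/(2+q*) satisfies Z_4' = (4(2-q*)/(2+q*Σ_+)) · [Σ_-^2 + (2Σ_+ + q*)^2/(4 - (q*)^2)] · Z_4; in particular Z_4' ≥ 0, with equality exactly when Σ_- = 0 and Σ_+ = -q*/2. -/

import Mathlib

set_option maxHeartbeats 1000000 in
lemma Z4_alg (qs s sm a o X Y : ℝ) (ha : a ≠ 0) (ho : o ≠ 0) (hc : 2+qs*s ≠ 0)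
    (h2 : (2:ℝ)+qs ≠ 0) (h4 : 4-qs^2 ≠ 0) (hcon : o = 1 - s^2 - sm^2 - a) :
    4*(2-qs)/(2+qs*s) * (sm^2 + (2*s+qs)^2/(4-qs^2)) * (X*Y/(2+qs*s)^2)
    = (((2*((2*(s^2+sm^2)+qs*o) + 2*s)*a) * (qs/(2+qs)) * (X/a) * Y
        + X * ((2*((2*(s^2+sm^2)+qs*o) - qs)*o) * (1-qs/(2+qs)) * (Y/o)))
       * (2+qs*s)^2
      - X*Y * ((2:ℝ) * (2+qs*s)^1 * (qs*(-(2-(2*(s^2+sm^2)+qs*o))*s - 2*a))))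
      / ((2+qs*s)^2)^2 := by
  subst hcon
  field_simp
  ring

/-- The monotone function Z₄ = (N₋²-N₊²)^m Ω^{1-m}/(2+q*Σ₊)² with m = q*/(2+q*)
satisfies the stated evolution equation along the Bianchi VI₀ flow, its
derivative is nonnegative, and it vanishes exactly when Σ₋ = 0 and Σ₊ = -q*/2. -/
theorem Z4_monotone
    (γ : ℝ) (hγ : γ ∈ Set.Ioo (2/3 : ℝ) 2)
    (qs : ℝ) (hqs : qs = (3 * γ - 2) / 2)
    (m : ℝ) (hm : m = qs / (2 + qs))
    (Np Nm Sp Sm Om : ℝ → ℝ)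
    (q : ℝ → ℝ) (hq : ∀ τ, q τ = 2 * (Sp τ ^ 2 + Sm τ ^ 2) + qs * Om τ)
    (hNp : ∀ τ, HasDerivAt Np ((q τ + 2 * Sp τ) * Np τ + 2 * Real.sqrt 3 * Sm τ * Nm τ) τ)
    (hNm : ∀ τ, HasDerivAt Nm ((q τ + 2 * Sp τ) * Nm τ + 2 * Real.sqrt 3 * Sm τ * Np τ) τ)
    (hSp : ∀ τ, HasDerivAt Sp (-(2 - q τ) * Sp τ - 2 * (Nm τ ^ 2 - Np τ ^ 2)) τ)
    (hSm : ∀ τ, HasDerivAt Sm (-(2 - q τ) * Sm τ - 2 * Real.sqrt 3 * Np τ * Nm τ) τ)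
    (hOm : ∀ τ, HasDerivAt Om (2 * (q τ - qs) * Om τ) τ)
    (hcon : ∀ τ, Sp τ ^ 2 + Sm τ ^ 2 + Nm τ ^ 2 - Np τ ^ 2 + Om τ = 1)
    (hOmpos : ∀ τ, 0 < Om τ)
    (hNN : ∀ τ, Np τ ^ 2 < Nm τ ^ 2)
    (hden : ∀ τ, 0 < 2 + qs * Sp τ)
    (Z4 : ℝ → ℝ)
    (hZ4 : ∀ τ, Z4 τ = (Nm τ ^ 2 - Np τ ^ 2) ^ m * Om τ ^ (1 - m)
        / (2 + qs * Sp τ) ^ 2) :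
    ∀ τ,
      HasDerivAt Z4
        (4 * (2 - qs) / (2 + qs * Sp τ)
          * (Sm τ ^ 2 + (2 * Sp τ + qs) ^ 2 / (4 - qs ^ 2)) * Z4 τ) τ ∧
      0 ≤ 4 * (2 - qs) / (2 + qs * Sp τ)
          * (Sm τ ^ 2 + (2 * Sp τ + qs) ^ 2 / (4 - qs ^ 2)) * Z4 τ ∧
      (4 * (2 - qs) / (2 + qs * Sp τ)
          * (Sm τ ^ 2 + (2 * Sp τ + qs) ^ 2 / (4 - qs ^ 2)) * Z4 τ = 0
        ↔ Sm τ = 0 ∧ Sp τ = -qs / 2) := by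
  have hZfun : Z4 = fun t => (Nm t ^ 2 - Np t ^ 2) ^ m * Om t ^ (1 - m)
      / (2 + qs * Sp t) ^ 2 := funext hZ4
  subst hZfun
  obtain ⟨hγ1, hγ2⟩ := hγ
  have hqs0 : 0 < qs := by rw [hqs]; linarith
  have hqs2 : qs < 2 := by rw [hqs]; linarith
  have h4 : 0 < 4 - qs ^ 2 := by nlinarith
  have h2qs : (2 : ℝ) + qs ≠ 0 := by linarith
  intro τ
  have hApos : 0 < Nm τ ^ 2 - Np τ ^ 2 := sub_pos.mpr (hNN τ)
  have hcpos := hden τ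
  have hopos := hOmpos τ
  have hA : HasDerivAt (fun t => Nm t ^ 2 - Np t ^ 2)
      (2 * (q τ + 2 * Sp τ) * (Nm τ ^ 2 - Np τ ^ 2)) τ := by
    have h := ((hNm τ).pow 2).sub ((hNp τ).pow 2)
    refine h.congr_deriv ?_
    push_cast
    ring
  have h1 : HasDerivAt (fun t => (Nm t ^ 2 - Np t ^ 2) ^ m)
      ((2 * (q τ + 2 * Sp τ) * (Nm τ ^ 2 - Np τ ^ 2)) * m
        * (Nm τ ^ 2 - Np τ ^ 2) ^ (m - 1)) τ :=
    hA.rpow_const (Or.inl hApos.ne')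
  have h2 : HasDerivAt (fun t => Om t ^ (1 - m))
      ((2 * (q τ - qs) * Om τ) * (1 - m) * Om τ ^ (1 - m - 1)) τ :=
    (hOm τ).rpow_const (Or.inl hopos.ne')
  have hC : HasDerivAt (fun t => 2 + qs * Sp t)
      (qs * (-(2 - q τ) * Sp τ - 2 * (Nm τ ^ 2 - Np τ ^ 2))) τ :=
    ((hSp τ).const_mul qs).const_add 2
  have hC2 := hC.pow 2
  have hdiv := (h1.mul h2).div hC2 (pow_ne_zero 2 hcpos.ne')
  have hb : Om τ = 1 - Sp τ ^ 2 - Sm τ ^ 2 - (Nm τ ^ 2 - Np τ ^ 2) := by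
    have := hcon τ; linarith
  have hkey : HasDerivAt
      (fun t => (Nm t ^ 2 - Np t ^ 2) ^ m * Om t ^ (1 - m) / (2 + qs * Sp t) ^ 2)
      (4 * (2 - qs) / (2 + qs * Sp τ)
        * (Sm τ ^ 2 + (2 * Sp τ + qs) ^ 2 / (4 - qs ^ 2))
        * ((Nm τ ^ 2 - Np τ ^ 2) ^ m * Om τ ^ (1 - m) / (2 + qs * Sp τ) ^ 2)) τ := by
    refine hdiv.congr_deriv (Eq.symm ?_)
    rw [Real.rpow_sub_one hApos.ne', Real.rpow_sub_one hopos.ne', hq τ, hm]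
    push_cast
    exact Z4_alg qs (Sp τ) (Sm τ) (Nm τ ^ 2 - Np τ ^ 2) (Om τ)
      ((Nm τ ^ 2 - Np τ ^ 2) ^ (qs / (2 + qs))) (Om τ ^ (1 - qs / (2 + qs)))
      hApos.ne' hopos.ne' hcpos.ne' h2qs h4.ne' hb
  have hZpos : 0 < (Nm τ ^ 2 - Np τ ^ 2) ^ m * Om τ ^ (1 - m) / (2 + qs * Sp τ) ^ 2 :=
    div_pos (mul_pos (Real.rpow_pos_of_pos hApos m) (Real.rpow_pos_of_pos hopos _))
      (by positivity)
  have hF1 : 0 < 4 * (2 - qs) / (2 + qs * Sp τ) := div_pos (by linarith) hcpos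
  refine ⟨hkey, ?_, ?_⟩
  · have hF2 : 0 ≤ Sm τ ^ 2 + (2 * Sp τ + qs) ^ 2 / (4 - qs ^ 2) := by positivity
    exact mul_nonneg (mul_nonneg hF1.le hF2) hZpos.le
  · constructor
    · intro h
      have hmid : Sm τ ^ 2 + (2 * Sp τ + qs) ^ 2 / (4 - qs ^ 2) = 0 := by
        rcases mul_eq_zero.mp h with h' | h'
        · rcases mul_eq_zero.mp h' with h'' | h''
          · exact absurd h'' hF1.ne'
          · exact h''
        · exact absurd h' hZpos.ne'
      have hd : 0 ≤ (2 * Sp τ + qs) ^ 2 / (4 - qs ^ 2) := by positivity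
      have hSm0 : Sm τ ^ 2 = 0 := le_antisymm (by nlinarith) (sq_nonneg _)
      have hSp0 : (2 * Sp τ + qs) ^ 2 / (4 - qs ^ 2) = 0 := by linarith [sq_nonneg (Sm τ)]
      have hSp1 : (2 * Sp τ + qs) ^ 2 = 0 := by
        rcases div_eq_zero_iff.mp hSp0 with h' | h'
        · exact h'
        · exact absurd h' h4.ne'
      constructor
      · exact pow_eq_zero_iff two_ne_zero |>.mp hSm0
      · have := pow_eq_zero_iff two_ne_zero |>.mp hSp1
        linarith
    · rintro ⟨h1', h2'⟩
      rw [h1', h2']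
      ring
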